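/- For m < n, 1 ≤ p < n/m, and f : (0,∞) → [0,∞) non-increasing, the weighted Hardy-type inequality holds: ‖χ_{(0,1)}(s) ∫_s^1 f(r) r^{−1+m/n} dr‖_{L^{np/(n−mp), p}(0,∞)} ≤ C ‖χ_{(0,1)} f‖_{L^{p,p}(0,∞)} for some constant C independent of f, where ‖g‖_{L^{q,p}} = ‖g*(s) s^{1/q − 1/p}‖_{L^p}. -/

import Mathlib

open MeasureTheory Set
open scoped ENNReal NNReal

noncomputable section

/-- The non-increasing rearrangement of `f` with respect to the measure `μ`:
`f*(s) = inf { t : μ {x | f x > t} ≤ s }`. -/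
def rearr {α : Type*} [MeasurableSpace α] (μ : Measure α) (f : α → ℝ≥0∞) (s : ℝ) : ℝ≥0∞ :=
  sInf {t : ℝ≥0∞ | μ {x | t < f x} ≤ ENNReal.ofReal s}

/-- The Lorentz functional `‖g‖_{L^{q,p}(0,∞)} = ‖g*(s) s^{1/q − 1/p}‖_{L^p(0,∞)}`. -/
def lorentzNorm (q p : ℝ) (g : ℝ → ℝ≥0∞) : ℝ≥0∞ :=
  (∫⁻ s in Set.Ioi (0:ℝ),
      (rearr (volume.restrict (Set.Ioi (0:ℝ))) g s) ^ p * ENNReal.ofReal (s ^ (p / q - 1))) ^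
    (1 / p)

lemma lint_rpow_Ioo_zero {c : ℝ} (hc : -1 < c) {r : ℝ} (hr : 0 ≤ r) :
    ∫⁻ x in Ioo (0:ℝ) r, ENNReal.ofReal (x ^ c) = ENNReal.ofReal (r ^ (c+1) / (c+1)) := by
  have hint : IntervalIntegrable (fun x : ℝ => x ^ c) volume 0 r :=
    intervalIntegral.intervalIntegrable_rpow' hc
  have hIoo : IntegrableOn (fun x : ℝ => x ^ c) (Ioo 0 r) volume :=
    ((intervalIntegrable_iff_integrableOn_Ioc_of_le hr).1 hint).mono_set Ioo_subset_Ioc_self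
  rw [← ofReal_integral_eq_lintegral_ofReal hIoo]
  · congr 1
    rw [← integral_Ioc_eq_integral_Ioo, ← intervalIntegral.integral_of_le hr,
      integral_rpow (Or.inl hc), Real.zero_rpow (by linarith), sub_zero]
  · filter_upwards [ae_restrict_mem measurableSet_Ioo] with x hx
    exact Real.rpow_nonneg hx.1.le c

lemma lint_rpow_Ioo_one {c : ℝ} (hc : c < -1) {s : ℝ} (hs : 0 < s) (hs1 : s < 1) :
    ∫⁻ x in Ioo s 1, ENNReal.ofReal (x ^ c) ≤ ENNReal.ofReal (s ^ (c+1) / (-(c+1))) := by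
  have h0 : (0:ℝ) ∉ Set.uIcc s (1:ℝ) := by
    rw [Set.uIcc_of_le hs1.le]; intro h; exact absurd h.1 (not_le.2 hs)
  have hint : IntervalIntegrable (fun x : ℝ => x ^ c) volume s 1 :=
    intervalIntegral.intervalIntegrable_rpow (Or.inr h0)
  have hIoo : IntegrableOn (fun x : ℝ => x ^ c) (Ioo s 1) volume :=
    ((intervalIntegrable_iff_integrableOn_Ioc_of_le hs1.le).1 hint).mono_set Ioo_subset_Ioc_self
  rw [← ofReal_integral_eq_lintegral_ofReal hIoo]
  · apply ENNReal.ofReal_le_ofReal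
    rw [← integral_Ioc_eq_integral_Ioo, ← intervalIntegral.integral_of_le hs1.le,
      integral_rpow (Or.inr ⟨by linarith, h0⟩), Real.one_rpow]
    have hc1 : (0:ℝ) < -(c + 1) := by linarith
    have h2 : (1 - s^(c+1)) / (c+1) = (s^(c+1) - 1) / (-(c+1)) := by
      rw [div_neg]; ring
    rw [h2]
    gcongr
    linarith
  · filter_upwards [ae_restrict_mem measurableSet_Ioo] with x hx
    exact Real.rpow_nonneg (le_trans hs.le hx.1.le) c

lemma rearr_le_self {g : ℝ → ℝ≥0∞} (hg : AntitoneOn g (Ioi 0))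
    (hg0 : ∀ x, x ≤ 0 → g x = 0) {s : ℝ} (hs : 0 < s) :
    rearr (volume.restrict (Ioi 0)) g s ≤ g s := by
  apply sInf_le
  have hsub : {x : ℝ | g s < g x} ⊆ Ioo 0 s := by
    intro x hx
    simp only [mem_setOf_eq] at hx
    rcases le_or_gt x 0 with h | h
    · rw [hg0 x h] at hx; exact absurd hx (by simp)
    · refine ⟨h, ?_⟩
      by_contra hxs
      exact absurd (hg (mem_Ioi.2 hs) (mem_Ioi.2 h) (not_lt.1 hxs)) (not_le.2 hx)
  calc (volume.restrict (Ioi 0)) {x | g s < g x} ≤ volume.restrict (Ioi 0) (Ioo 0 s) :=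
        measure_mono hsub
    _ ≤ volume (Ioo 0 s) := Measure.restrict_le_self _
    _ = ENNReal.ofReal s := by rw [Real.volume_Ioo, sub_zero]

lemma le_rearr {h : ℝ → ℝ≥0∞} (hh : AntitoneOn h (Ioi 0))
    {s t : ℝ} (hs : 0 < s) (hst : s < t) :
    h t ≤ rearr (volume.restrict (Ioi 0)) h s := by
  apply le_sInf
  intro u hu
  simp only [mem_setOf_eq] at hu
  by_contra hc
  push_neg at hc
  have hsub : Ioo 0 t ⊆ {x : ℝ | u < h x} := by
    intro x hx
    exact lt_of_lt_of_le hc (hh hx.1 (hs.trans hst) hx.2.le)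
  have : ENNReal.ofReal t ≤ ENNReal.ofReal s := by
    calc ENNReal.ofReal t = volume.restrict (Ioi 0) (Ioo 0 t) := by
          rw [Measure.restrict_apply measurableSet_Ioo, inter_eq_self_of_subset_left Ioo_subset_Ioi_self,
            Real.volume_Ioo, sub_zero]
      _ ≤ _ := (measure_mono hsub).trans hu
  rw [ENNReal.ofReal_le_ofReal_iff hs.le] at this
  linarith

lemma lintegral_Ioi_comp_two_mul {φ : ℝ → ℝ≥0∞} (hφ : Measurable φ) :
    ∫⁻ s in Ioi (0:ℝ), φ (2 * s) = ENNReal.ofReal (1/2) * ∫⁻ r in Ioi (0:ℝ), φ r := by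
  have hmeas : Measurable fun s : ℝ => 2 * s := measurable_const_mul 2
  have hpre : (fun s : ℝ => 2 * s) ⁻¹' Ioi 0 = Ioi 0 := by
    ext x; simp only [mem_preimage, mem_Ioi]
    constructor <;> intro h <;> linarith
  have hmap : Measure.map (fun s : ℝ => 2 * s) (volume.restrict (Ioi 0))
      = ENNReal.ofReal (1/2) • volume.restrict (Ioi 0) := by
    rw [← hpre, ← Measure.restrict_map hmeas measurableSet_Ioi,
      Real.map_volume_mul_left (two_ne_zero), hpre]
    rw [Measure.restrict_smul]
    congr 1
    rw [abs_of_pos (by norm_num : (0:ℝ) < 2⁻¹)]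
    norm_num
  calc ∫⁻ s in Ioi (0:ℝ), φ (2 * s)
      = ∫⁻ y, φ y ∂(Measure.map (fun s : ℝ => 2 * s) (volume.restrict (Ioi 0))) :=
        (lintegral_map hφ hmeas).symm
    _ = ENNReal.ofReal (1/2) * ∫⁻ r in Ioi (0:ℝ), φ r := by
        rw [hmap, lintegral_smul_measure, smul_eq_mul]

lemma hardy_fubini {G : ℝ → ℝ≥0∞} (hG : Measurable G) {γ : ℝ} (hγ : -1 < γ) :
    ∫⁻ s in Ioo (0:ℝ) 1, (∫⁻ r in Ioo s 1, G r) * ENNReal.ofReal (s ^ γ)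
      = ∫⁻ r in Ioo (0:ℝ) 1, G r * ENNReal.ofReal (r ^ (γ+1) / (γ+1)) := by
  have hw : Measurable fun s : ℝ => ENNReal.ofReal (s ^ γ) :=
    by measurability
  set T : ℝ × ℝ → ℝ≥0∞ :=
    fun z => {z : ℝ × ℝ | z.1 < z.2}.indicator (fun z => G z.2 * ENNReal.ofReal (z.1 ^ γ)) z with hT
  have hTmeas : Measurable T := by
    apply Measurable.indicator
    · exact (hG.comp measurable_snd).mul (hw.comp measurable_fst)
    · exact measurableSet_lt measurable_fst measurable_snd
  have step1 : ∀ s ∈ Ioo (0:ℝ) 1,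
      (∫⁻ r in Ioo s 1, G r) * ENNReal.ofReal (s ^ γ) = ∫⁻ r in Ioo (0:ℝ) 1, T (s, r) := by
    intro s hs
    have : ∀ r : ℝ, T (s, r) = (Ioi s).indicator (fun r => G r * ENNReal.ofReal (s ^ γ)) r := by
      intro r
      simp only [hT, Set.indicator_apply, mem_setOf_eq, mem_Ioi]
    simp_rw [this]
    rw [lintegral_indicator measurableSet_Ioi, Measure.restrict_restrict measurableSet_Ioi]
    have hset : Ioi s ∩ Ioo 0 1 = Ioo s 1 := by
      ext x
      simp only [mem_inter_iff, mem_Ioi, mem_Ioo]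
      constructor
      · rintro ⟨h1, h2, h3⟩; exact ⟨h1, h3⟩
      · rintro ⟨h1, h2⟩; exact ⟨h1, hs.1.trans h1, h2⟩
    rw [hset, lintegral_mul_const _ hG]
  have step2 : ∀ r ∈ Ioo (0:ℝ) 1,
      (∫⁻ s in Ioo (0:ℝ) 1, T (s, r)) = G r * ENNReal.ofReal (r ^ (γ+1) / (γ+1)) := by
    intro r hr
    have : ∀ s : ℝ, T (s, r) = (Iio r).indicator (fun s => G r * ENNReal.ofReal (s ^ γ)) s := by
      intro s
      simp only [hT, Set.indicator_apply, mem_setOf_eq, mem_Iio]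
    simp_rw [this]
    rw [lintegral_indicator measurableSet_Iio, Measure.restrict_restrict measurableSet_Iio]
    have hset : Iio r ∩ Ioo 0 1 = Ioo 0 r := by
      ext x
      simp only [mem_inter_iff, mem_Iio, mem_Ioo]
      constructor
      · rintro ⟨h1, h2, h3⟩; exact ⟨h2, h1⟩
      · rintro ⟨h1, h2⟩; exact ⟨h2, h1, h2.trans hr.2⟩
    rw [hset, lintegral_const_mul _ hw, lint_rpow_Ioo_zero hγ hr.1.le]
  calc ∫⁻ s in Ioo (0:ℝ) 1, (∫⁻ r in Ioo s 1, G r) * ENNReal.ofReal (s ^ γ)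
      = ∫⁻ s in Ioo (0:ℝ) 1, ∫⁻ r in Ioo (0:ℝ) 1, T (s, r) :=
        setLIntegral_congr_fun measurableSet_Ioo step1
    _ = ∫⁻ r in Ioo (0:ℝ) 1, ∫⁻ s in Ioo (0:ℝ) 1, T (s, r) :=
        lintegral_lintegral_swap hTmeas.aemeasurable
    _ = ∫⁻ r in Ioo (0:ℝ) 1, G r * ENNReal.ofReal (r ^ (γ+1) / (γ+1)) :=
        setLIntegral_congr_fun measurableSet_Ioo step2

lemma meas_orpow (γ : ℝ) : Measurable fun s : ℝ => ENNReal.ofReal (s ^ γ) :=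
  ENNReal.measurable_ofReal.comp (measurable_id.pow measurable_const)

lemma hardy {a p : ℝ} (ha0 : 0 < a) (hap : a * p < 1) (hp : 1 ≤ p) :
    ∃ C : ℝ≥0∞, C ≠ ⊤ ∧ ∀ H : ℝ → ℝ≥0∞, Measurable H →
      ∫⁻ s in Ioo (0:ℝ) 1,
          (∫⁻ r in Ioo s 1, H r * ENNReal.ofReal (r ^ (a - 1))) ^ p
            * ENNReal.ofReal (s ^ (-(a * p)))
        ≤ C * ∫⁻ r in Ioo (0:ℝ) 1, H r ^ p := by
  have hp0 : 0 < p := lt_of_lt_of_le one_pos hp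
  rcases eq_or_lt_of_le hp with h1 | h1
  · -- p = 1
    subst h1
    refine ⟨ENNReal.ofReal (1 / (1 - a)), ENNReal.ofReal_ne_top, fun H hH => ?_⟩
    have ha1 : a < 1 := by linarith [hap]
    have hγ : (-1:ℝ) < -a := by linarith
    have hGm : Measurable fun r => H r * ENNReal.ofReal (r ^ (a - 1)) :=
      hH.mul (meas_orpow _)
    calc ∫⁻ s in Ioo (0:ℝ) 1,
          (∫⁻ r in Ioo s 1, H r * ENNReal.ofReal (r ^ (a - 1))) ^ (1:ℝ)
            * ENNReal.ofReal (s ^ (-(a * 1)))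
        = ∫⁻ s in Ioo (0:ℝ) 1,
            (∫⁻ r in Ioo s 1, H r * ENNReal.ofReal (r ^ (a - 1))) * ENNReal.ofReal (s ^ (-a)) := by
          simp only [ENNReal.rpow_one, mul_one]
      _ = ∫⁻ r in Ioo (0:ℝ) 1,
            (H r * ENNReal.ofReal (r ^ (a - 1))) * ENNReal.ofReal (r ^ (-a + 1) / (-a + 1)) :=
          hardy_fubini hGm hγ
      _ = ∫⁻ r in Ioo (0:ℝ) 1, ENNReal.ofReal (1 / (1 - a)) * H r ^ (1:ℝ) := by
          apply setLIntegral_congr_fun measurableSet_Ioo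
          intro r hr
          have h0 : (0:ℝ) < r := hr.1
          have hsc : ENNReal.ofReal (r ^ (a-1)) * ENNReal.ofReal (r ^ (-a+1) / (-a+1))
              = ENNReal.ofReal (1/(1-a)) := by
            rw [← ENNReal.ofReal_mul (Real.rpow_nonneg h0.le _), ← mul_div_assoc,
              ← Real.rpow_add h0, show a - 1 + (-a + 1) = 0 by ring, Real.rpow_zero,
              show -a + 1 = 1 - a by ring]
          beta_reduce
          rw [ENNReal.rpow_one, mul_assoc, hsc, mul_comm]
      _ = ENNReal.ofReal (1 / (1 - a)) * ∫⁻ r in Ioo (0:ℝ) 1, H r ^ (1:ℝ) :=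
          lintegral_const_mul' _ _ ENNReal.ofReal_ne_top
      _ ≤ ENNReal.ofReal (1 / (1 - a)) * ∫⁻ r in Ioo (0:ℝ) 1, H r ^ (1:ℝ) := le_rfl
  · -- 1 < p
    set p' : ℝ := p / (p - 1) with hp'def
    have hpq : p.HolderConjugate p' := Real.HolderConjugate.conjExponent h1
    have hp1 : (0:ℝ) < p - 1 := by linarith
    have hinvp' : 1 / p' = 1 - 1 / p := by
      rw [hp'def]; field_simp
    set b : ℝ := (a - 1 / p) / 2 with hbdef
    have hab : a < 1 / p := by
      rw [lt_div_iff₀ hp0]; linarith [hap]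
    have hb0 : b < 0 := by rw [hbdef]; linarith
    have hb1 : a - 1 / p < b := by rw [hbdef]; linarith
    set c : ℝ := (a - 1 - b) * p' with hcdef
    have hp'pos : 0 < p' := hpq.symm.pos
    have hp'p : p' * (p - 1) = p := by rw [hp'def]; field_simp
    have hc : c < -1 := by
      have h2 : a - 1 - b < -(1 / p') := by
        rw [hinvp']; linarith
      calc c = (a - 1 - b) * p' := hcdef
        _ < (-(1 / p')) * p' := mul_lt_mul_of_pos_right h2 hp'pos
        _ = -1 := by field_simp
    set γ : ℝ := -(a * p) + (c + 1) * (p - 1) with hγdef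
    have hγb : γ = -(b * p) - 1 := by
      rw [hγdef, hcdef]
      have h3 : (a - 1 - b) * p' * (p - 1) = (a - 1 - b) * p := by
        rw [mul_assoc, hp'p]
      rw [add_mul, h3]
      ring
    have hbp : 0 < -(b * p) := by
      have := mul_pos (neg_pos.2 hb0) hp0
      nlinarith
    have hγ : (-1:ℝ) < γ := by rw [hγb]; linarith
    set K : ℝ := 1 / (-(c + 1)) with hKdef
    have hK0 : 0 < K := by
      rw [hKdef]
      have h4 : 0 < -(c+1) := by linarith
      positivity
    have hγ1 : γ + 1 = -(b * p) := by rw [hγb]; ring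
    have hγ1pos : 0 < γ + 1 := by rw [hγ1]; exact hbp
    refine ⟨ENNReal.ofReal (K ^ (p - 1)) * ENNReal.ofReal (1 / (γ + 1)),
      ENNReal.mul_ne_top ENNReal.ofReal_ne_top ENNReal.ofReal_ne_top, fun H hH => ?_⟩
    set G : ℝ → ℝ≥0∞ := fun r => H r ^ p * ENNReal.ofReal (r ^ (b * p)) with hGdef
    have hGm : Measurable G := (hH.pow measurable_const).mul (meas_orpow _)
    set A : ℝ → ℝ≥0∞ := fun s => ∫⁻ r in Ioo s 1, G r with hAdef
    have key : ∀ s ∈ Ioo (0:ℝ) 1,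
        (∫⁻ r in Ioo s 1, H r * ENNReal.ofReal (r ^ (a - 1))) ^ p
            * ENNReal.ofReal (s ^ (-(a * p)))
          ≤ ENNReal.ofReal (K ^ (p - 1)) * (A s * ENNReal.ofReal (s ^ γ)) := by
      intro s hs
      set u : ℝ → ℝ≥0∞ := fun r => H r * ENNReal.ofReal (r ^ b) with hudef
      set v : ℝ → ℝ≥0∞ := fun r => ENNReal.ofReal (r ^ (a - 1 - b)) with hvdef
      have hum : Measurable u := hH.mul (meas_orpow _)
      have hvm : Measurable v := meas_orpow _
      have heq : ∫⁻ r in Ioo s 1, H r * ENNReal.ofReal (r ^ (a - 1))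
          = ∫⁻ r in Ioo s 1, (u * v) r := by
        apply setLIntegral_congr_fun measurableSet_Ioo
        intro r hr
        have hr0 : (0:ℝ) < r := hs.1.trans hr.1
        simp only [hudef, hvdef, Pi.mul_apply]
        rw [mul_assoc, ← ENNReal.ofReal_mul (Real.rpow_nonneg hr0.le _),
          ← Real.rpow_add hr0]
        ring_nf
      have hup : ∫⁻ r in Ioo s 1, u r ^ p = A s := by
        rw [hAdef]
        apply setLIntegral_congr_fun measurableSet_Ioo
        intro r hr
        have hr0 : (0:ℝ) < r := hs.1.trans hr.1
        simp only [hudef, hGdef]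
        rw [ENNReal.mul_rpow_of_nonneg _ _ hp0.le,
          ENNReal.ofReal_rpow_of_nonneg (Real.rpow_nonneg hr0.le _) hp0.le,
          ← Real.rpow_mul hr0.le]
      have hvp : ∫⁻ r in Ioo s 1, v r ^ p' = ∫⁻ r in Ioo s 1, ENNReal.ofReal (r ^ c) := by
        apply setLIntegral_congr_fun measurableSet_Ioo
        intro r hr
        have hr0 : (0:ℝ) < r := hs.1.trans hr.1
        simp only [hvdef, hcdef]
        rw [ENNReal.ofReal_rpow_of_nonneg (Real.rpow_nonneg hr0.le _) hp'pos.le,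
          ← Real.rpow_mul hr0.le]
      have holder : ∫⁻ r in Ioo s 1, H r * ENNReal.ofReal (r ^ (a - 1))
          ≤ (A s) ^ (1/p) * (∫⁻ r in Ioo s 1, ENNReal.ofReal (r ^ c)) ^ (1/p') := by
        rw [heq, ← hup, ← hvp]
        exact ENNReal.lintegral_mul_le_Lp_mul_Lq _ hpq hum.aemeasurable hvm.aemeasurable
      have hB : (∫⁻ r in Ioo s 1, ENNReal.ofReal (r ^ c)) ≤ ENNReal.ofReal (K * s ^ (c+1)) := by
        refine (lint_rpow_Ioo_one hc hs.1 hs.2).trans_eq ?_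
        rw [hKdef]
        rw [div_eq_mul_inv, one_div, mul_comm]
      have hFs : (∫⁻ r in Ioo s 1, H r * ENNReal.ofReal (r ^ (a - 1))) ^ p
          ≤ A s * ENNReal.ofReal (K ^ (p-1) * s ^ ((c+1)*(p-1))) := by
        calc (∫⁻ r in Ioo s 1, H r * ENNReal.ofReal (r ^ (a - 1))) ^ p
            ≤ ((A s) ^ (1/p) * (∫⁻ r in Ioo s 1, ENNReal.ofReal (r ^ c)) ^ (1/p')) ^ p :=
              ENNReal.rpow_le_rpow holder hp0.le
          _ = A s * (∫⁻ r in Ioo s 1, ENNReal.ofReal (r ^ c)) ^ (p - 1) := by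
              rw [ENNReal.mul_rpow_of_nonneg _ _ hp0.le, ← ENNReal.rpow_mul, ← ENNReal.rpow_mul,
                one_div, inv_mul_cancel₀ hp0.ne', ENNReal.rpow_one]
              congr 2
              rw [hinvp']
              field_simp
          _ ≤ A s * (ENNReal.ofReal (K * s ^ (c+1))) ^ (p - 1) :=
              mul_le_mul_right (ENNReal.rpow_le_rpow hB hp1.le) _
          _ = A s * ENNReal.ofReal (K ^ (p-1) * s ^ ((c+1)*(p-1))) := by
              rw [ENNReal.ofReal_rpow_of_nonneg
                  (mul_nonneg hK0.le (Real.rpow_nonneg hs.1.le _)) hp1.le,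
                Real.mul_rpow hK0.le (Real.rpow_nonneg hs.1.le _), ← Real.rpow_mul hs.1.le]
      calc (∫⁻ r in Ioo s 1, H r * ENNReal.ofReal (r ^ (a - 1))) ^ p
            * ENNReal.ofReal (s ^ (-(a * p)))
          ≤ (A s * ENNReal.ofReal (K ^ (p-1) * s ^ ((c+1)*(p-1)))) * ENNReal.ofReal (s ^ (-(a * p))) :=
            mul_le_mul_left hFs _
        _ = ENNReal.ofReal (K ^ (p - 1)) * (A s * ENNReal.ofReal (s ^ γ)) := by
            have hreal : K^(p-1) * s^((c+1)*(p-1)) * s^(-(a*p)) = K^(p-1) * s^γ := by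
              rw [mul_assoc, ← Real.rpow_add hs.1]
              congr 2
              rw [hγdef]; ring
            rw [mul_assoc, ← ENNReal.ofReal_mul
                (mul_nonneg (Real.rpow_nonneg hK0.le _) (Real.rpow_nonneg hs.1.le _)),
              hreal, ENNReal.ofReal_mul (Real.rpow_nonneg hK0.le _)]
            ring
    calc ∫⁻ s in Ioo (0:ℝ) 1,
          (∫⁻ r in Ioo s 1, H r * ENNReal.ofReal (r ^ (a - 1))) ^ p
            * ENNReal.ofReal (s ^ (-(a * p)))
        ≤ ∫⁻ s in Ioo (0:ℝ) 1,
            ENNReal.ofReal (K ^ (p - 1)) * (A s * ENNReal.ofReal (s ^ γ)) := by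
          apply lintegral_mono_ae
          exact (ae_restrict_iff' measurableSet_Ioo).2 (ae_of_all _ key)
      _ = ENNReal.ofReal (K ^ (p - 1)) * ∫⁻ s in Ioo (0:ℝ) 1, A s * ENNReal.ofReal (s ^ γ) :=
          lintegral_const_mul' _ _ ENNReal.ofReal_ne_top
      _ = ENNReal.ofReal (K ^ (p - 1)) *
            ∫⁻ r in Ioo (0:ℝ) 1, G r * ENNReal.ofReal (r ^ (γ+1) / (γ+1)) := by
          rw [hardy_fubini hGm hγ]
      _ = ENNReal.ofReal (K ^ (p - 1)) *
            ∫⁻ r in Ioo (0:ℝ) 1, ENNReal.ofReal (1 / (γ + 1)) * H r ^ p := by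
          congr 1
          apply setLIntegral_congr_fun measurableSet_Ioo
          intro r hr
          simp only [hGdef]
          rw [mul_assoc, ← ENNReal.ofReal_mul (Real.rpow_nonneg hr.1.le _), ← mul_div_assoc,
            ← Real.rpow_add hr.1, show b * p + (γ + 1) = 0 by rw [hγ1]; ring, Real.rpow_zero,
            mul_comm]
      _ = (ENNReal.ofReal (K ^ (p - 1)) * ENNReal.ofReal (1 / (γ + 1))) *
            ∫⁻ r in Ioo (0:ℝ) 1, H r ^ p := by
          rw [lintegral_const_mul' _ _ ENNReal.ofReal_ne_top, mul_assoc]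

/-- For `m < n`, `1 ≤ p < n/m` and non-increasing `f : (0,∞) → [0,∞)`,
`‖χ_{(0,1)}(s) ∫_s^1 f(r) r^{−1+m/n} dr‖_{L^{np/(n−mp),p}} ≤ C ‖χ_{(0,1)} f‖_{L^{p,p}}`
with `C` independent of `f`. -/
theorem lorentz_reduction_inequality (m n : ℕ) (hm : 0 < m) (hmn : m < n)
    (p : ℝ) (hp1 : 1 ≤ p) (hp2 : p < (n:ℝ) / (m:ℝ)) :
    ∃ C : ℝ≥0, ∀ f : ℝ → ℝ, (∀ s ∈ Set.Ioi (0:ℝ), 0 ≤ f s) → AntitoneOn f (Set.Ioi 0) →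
      lorentzNorm ((n:ℝ) * p / ((n:ℝ) - (m:ℝ) * p)) p
          ((Set.Ioo (0:ℝ) 1).indicator
            (fun s => ∫⁻ r in Set.Ioo s 1, ENNReal.ofReal (f r * r ^ ((m:ℝ)/(n:ℝ) - 1)))) ≤
        (C : ℝ≥0∞) * lorentzNorm p p
          ((Set.Ioo (0:ℝ) 1).indicator (fun s => ENNReal.ofReal (f s))) := by
  have hp0 : (0:ℝ) < p := lt_of_lt_of_le one_pos hp1
  have hm0 : (0:ℝ) < (m:ℝ) := Nat.cast_pos.2 hm
  have hn0 : (0:ℝ) < (n:ℝ) := Nat.cast_pos.2 (hm.trans hmn)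
  set a : ℝ := (m:ℝ) / (n:ℝ) with hadef
  have ha0 : 0 < a := div_pos hm0 hn0
  have hmp : (m:ℝ) * p < (n:ℝ) := by
    have := (lt_div_iff₀ hm0).1 hp2
    linarith
  have hnm : (0:ℝ) < (n:ℝ) - (m:ℝ) * p := by linarith
  have hap : a * p < 1 := by
    rw [hadef, div_mul_eq_mul_div, div_lt_one hn0]
    exact hmp
  have hexp : p / ((n:ℝ) * p / ((n:ℝ) - (m:ℝ) * p)) - 1 = -(a * p) := by
    rw [hadef]
    field_simp
    ring
  have hppexp : p / p - 1 = (0:ℝ) := by rw [div_self hp0.ne', sub_self]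
  obtain ⟨C₀, hC₀top, hC₀⟩ := hardy ha0 hap hp1
  have hCenn_top : C₀ ^ (1/p) * (2:ℝ≥0∞) ^ (1/p) ≠ ⊤ :=
    ENNReal.mul_ne_top (ENNReal.rpow_ne_top_of_nonneg (by positivity) hC₀top)
      (ENNReal.rpow_ne_top_of_nonneg (by positivity) (by simp))
  refine ⟨(C₀ ^ (1/p) * (2:ℝ≥0∞) ^ (1/p)).toNNReal, fun f hf hfa => ?_⟩
  rw [ENNReal.coe_toNNReal hCenn_top]
  set H : ℝ → ℝ≥0∞ := fun r => if r ≤ 0 then (⊤:ℝ≥0∞) else ENNReal.ofReal (f r) with hHdef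
  have Hanti : Antitone H := by
    intro x y hxy
    simp only [hHdef]
    by_cases hy : y ≤ 0
    · rw [if_pos (hxy.trans hy), if_pos hy]
    · rw [if_neg hy]
      by_cases hx : x ≤ 0
      · rw [if_pos hx]; exact le_top
      · rw [if_neg hx]
        exact ENNReal.ofReal_le_ofReal
          (hfa (mem_Ioi.2 (not_le.1 hx)) (mem_Ioi.2 (not_le.1 hy)) hxy)
  have Hmeas : Measurable H := Hanti.measurable
  set g : ℝ → ℝ≥0∞ := (Set.Ioo (0:ℝ) 1).indicator
      (fun s => ∫⁻ r in Set.Ioo s 1, ENNReal.ofReal (f r * r ^ (a - 1))) with hgdef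
  set h : ℝ → ℝ≥0∞ := (Set.Ioo (0:ℝ) 1).indicator (fun s => ENNReal.ofReal (f s)) with hhdef
  have hheqind : h = (Set.Ioo (0:ℝ) 1).indicator H := by
    funext r
    by_cases hr : r ∈ Ioo (0:ℝ) 1
    · rw [hhdef, indicator_of_mem hr, indicator_of_mem hr, hHdef]
      simp only [if_neg (not_le.2 hr.1)]
    · rw [hhdef, indicator_of_notMem hr, indicator_of_notMem hr]
  have hhm : Measurable h := by
    rw [hheqind]; exact Hmeas.indicator measurableSet_Ioo
  have hganti : AntitoneOn g (Ioi 0) := by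
    intro x hx y hy hxy
    by_cases hy1 : y < 1
    · have hym : y ∈ Ioo (0:ℝ) 1 := ⟨hy, hy1⟩
      have hxm : x ∈ Ioo (0:ℝ) 1 := ⟨hx, lt_of_le_of_lt hxy hy1⟩
      rw [hgdef, indicator_of_mem hym, indicator_of_mem hxm]
      exact lintegral_mono_set (fun r hr => ⟨lt_of_le_of_lt hxy hr.1, hr.2⟩)
    · rw [hgdef, indicator_of_notMem (fun hc => hy1 hc.2)]
      exact zero_le
  have hg0 : ∀ x, x ≤ 0 → g x = 0 := by
    intro x hx
    rw [hgdef, indicator_of_notMem (fun hc => absurd hc.1 (not_lt.2 hx))]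
  have hhanti : AntitoneOn h (Ioi 0) := by
    intro x hx y hy hxy
    by_cases hy1 : y < 1
    · have hym : y ∈ Ioo (0:ℝ) 1 := ⟨hy, hy1⟩
      have hxm : x ∈ Ioo (0:ℝ) 1 := ⟨hx, lt_of_le_of_lt hxy hy1⟩
      rw [hhdef, indicator_of_mem hym, indicator_of_mem hxm]
      exact ENNReal.ofReal_le_ofReal (hfa hx hy hxy)
    · rw [hhdef, indicator_of_notMem (fun hc => hy1 hc.2)]
      exact zero_le
  set I : ℝ≥0∞ := ∫⁻ r in Ioo (0:ℝ) 1, H r ^ p with hIdef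
  -- LHS bound
  have hLHS : lorentzNorm ((n:ℝ) * p / ((n:ℝ) - (m:ℝ) * p)) p g ≤ (C₀ * I) ^ (1/p) := by
    rw [lorentzNorm, hexp]
    apply ENNReal.rpow_le_rpow ?_ (by positivity)
    calc ∫⁻ s in Ioi (0:ℝ),
          rearr (volume.restrict (Ioi 0)) g s ^ p * ENNReal.ofReal (s ^ (-(a * p)))
        ≤ ∫⁻ s in Ioi (0:ℝ), g s ^ p * ENNReal.ofReal (s ^ (-(a * p))) := by
          apply lintegral_mono_ae
          refine (ae_restrict_iff' measurableSet_Ioi).2 (ae_of_all _ fun s hs => ?_)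
          exact mul_le_mul_left
            (ENNReal.rpow_le_rpow (rearr_le_self hganti hg0 hs) hp0.le) _
      _ = ∫⁻ s in Ioo (0:ℝ) 1,
            (∫⁻ r in Ioo s 1, ENNReal.ofReal (f r * r ^ (a - 1))) ^ p
              * ENNReal.ofReal (s ^ (-(a * p))) := by
          have hind : ∀ s : ℝ, g s ^ p * ENNReal.ofReal (s ^ (-(a * p)))
              = (Ioo (0:ℝ) 1).indicator
                  (fun s => (∫⁻ r in Ioo s 1, ENNReal.ofReal (f r * r ^ (a - 1))) ^ p
                    * ENNReal.ofReal (s ^ (-(a * p)))) s := by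
            intro s
            by_cases hs : s ∈ Ioo (0:ℝ) 1
            · rw [indicator_of_mem hs, hgdef, indicator_of_mem hs]
            · rw [indicator_of_notMem hs, hgdef, indicator_of_notMem hs,
                ENNReal.zero_rpow_of_pos hp0, zero_mul]
          simp_rw [hind]
          rw [lintegral_indicator measurableSet_Ioo, Measure.restrict_restrict measurableSet_Ioo,
            inter_eq_self_of_subset_left Ioo_subset_Ioi_self]
      _ = ∫⁻ s in Ioo (0:ℝ) 1,
            (∫⁻ r in Ioo s 1, H r * ENNReal.ofReal (r ^ (a - 1))) ^ p
              * ENNReal.ofReal (s ^ (-(a * p))) := by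
          apply setLIntegral_congr_fun measurableSet_Ioo
          intro s hs
          beta_reduce
          congr 1
          congr 1
          apply setLIntegral_congr_fun measurableSet_Ioo
          intro r hr
          have hr0 : (0:ℝ) < r := hs.1.trans hr.1
          rw [hHdef]
          simp only [if_neg (not_le.2 hr0)]
          rw [ENNReal.ofReal_mul (hf r hr0)]
      _ ≤ C₀ * I := hC₀ H Hmeas
  -- RHS bound
  have hRHS : (ENNReal.ofReal (1/2) * I) ^ (1/p) ≤ lorentzNorm p p h := by
    rw [lorentzNorm, hppexp]
    apply ENNReal.rpow_le_rpow ?_ (by positivity)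
    simp only [Real.rpow_zero, ENNReal.ofReal_one, mul_one]
    have hind : ∀ r : ℝ, h r ^ p = (Ioo (0:ℝ) 1).indicator (fun r => H r ^ p) r := by
      intro r
      by_cases hr : r ∈ Ioo (0:ℝ) 1
      · rw [indicator_of_mem hr, hhdef, indicator_of_mem hr, hHdef]
        simp only [if_neg (not_le.2 hr.1)]
      · rw [indicator_of_notMem hr, hhdef, indicator_of_notMem hr,
          ENNReal.zero_rpow_of_pos hp0]
    calc ENNReal.ofReal (1/2) * I
        = ENNReal.ofReal (1/2) * ∫⁻ r in Ioi (0:ℝ), h r ^ p := by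
          congr 1
          rw [hIdef]
          symm
          simp_rw [hind]
          rw [lintegral_indicator measurableSet_Ioo, Measure.restrict_restrict measurableSet_Ioo,
            inter_eq_self_of_subset_left Ioo_subset_Ioi_self]
      _ = ∫⁻ s in Ioi (0:ℝ), h (2 * s) ^ p :=
          (lintegral_Ioi_comp_two_mul (hhm.pow measurable_const)).symm
      _ ≤ ∫⁻ s in Ioi (0:ℝ), rearr (volume.restrict (Ioi 0)) h s ^ p := by
          apply lintegral_mono_ae
          refine (ae_restrict_iff' measurableSet_Ioi).2 (ae_of_all _ fun s hs => ?_)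
          exact ENNReal.rpow_le_rpow (le_rearr hhanti hs (by linarith [mem_Ioi.1 hs])) hp0.le
  -- combine
  calc lorentzNorm ((n:ℝ) * p / ((n:ℝ) - (m:ℝ) * p)) p g
      ≤ (C₀ * I) ^ (1/p) := hLHS
    _ = C₀ ^ (1/p) * I ^ (1/p) := ENNReal.mul_rpow_of_nonneg _ _ (by positivity)
    _ = (C₀ ^ (1/p) * (2:ℝ≥0∞) ^ (1/p)) * (ENNReal.ofReal (1/2) * I) ^ (1/p) := by
        have htwo : ((2:ℝ≥0∞) * ENNReal.ofReal (1/2)) = 1 := by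
          rw [show (2:ℝ≥0∞) = ENNReal.ofReal 2 by simp, ← ENNReal.ofReal_mul (by norm_num)]
          norm_num
        rw [ENNReal.mul_rpow_of_nonneg _ _ (by positivity : (0:ℝ) ≤ 1/p)]
        rw [show C₀ ^ (1/p) * (2:ℝ≥0∞) ^ (1/p) * (ENNReal.ofReal (1/2) ^ (1/p) * I ^ (1/p))
            = C₀ ^ (1/p) * (((2:ℝ≥0∞) ^ (1/p) * ENNReal.ofReal (1/2) ^ (1/p)) * I ^ (1/p)) by ring]
        conv_rhs => rw [← ENNReal.mul_rpow_of_nonneg _ _ (by positivity : (0:ℝ) ≤ 1/p)]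
        rw [htwo, ENNReal.one_rpow, one_mul]
    _ ≤ (C₀ ^ (1/p) * (2:ℝ≥0∞) ^ (1/p)) * lorentzNorm p p h :=
        mul_le_mul_right hRHS _
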